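/- Let ω > 0, L > 0 and c₁ ∈ ℝ with c₁² / 4 − 1 > 0 and c₁ ≠ 0, and set ω̃ = √(c₁²/4 − 1). Define τ(t) = (1/c₁) · ln(L/(L − c₁ ω t)) on the interval J of times t for which L − c₁ ω t > 0 (note 0 ∈ J and τ(0) = 0). Then for any constants a, b ∈ ℝ, the function x(t) = √((L − c₁ ω t)/ω) · [ (cosh(ω̃ τ(t)) + (c₁/(2ω̃)) sinh(ω̃ τ(t))) a + (1/ω̃) sinh(ω̃ τ(t)) b ] satisfies x''(t) + (ω²/(L − c₁ ω t)²) x(t) = 0 for all t ∈ J. -/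

import Mathlib

/-- For `ω > 0`, `L > 0`, `c₁ ≠ 0` with `c₁²/4 − 1 > 0`,
`ω̃ = √(c₁²/4 − 1)`, and `τ(t) = (1/c₁) ln(L/(L − c₁ωt))` on the interval
`J = {t | L − c₁ωt > 0}` (which contains `0`, and `τ(0) = 0`), the function
`x(t) = √((L − c₁ωt)/ω)·[(cosh(ω̃τ) + (c₁/(2ω̃))sinh(ω̃τ)) a + (1/ω̃)sinh(ω̃τ) b]`
satisfies `x'' + (ω²/(L − c₁ωt)²) x = 0` on `J`. -/
theorem tdfho_inverse_square_frequency_solution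
    (ω L c₁ : ℝ) (hω : 0 < ω) (hL : 0 < L) (hc₁ : c₁ ≠ 0)
    (h : 0 < c₁ ^ 2 / 4 - 1)
    (ωtil : ℝ) (hωtil : ωtil = Real.sqrt (c₁ ^ 2 / 4 - 1))
    (J : Set ℝ) (hJ : J = {t : ℝ | 0 < L - c₁ * ω * t})
    (τ : ℝ → ℝ) (hτ : ∀ t, τ t = (1 / c₁) * Real.log (L / (L - c₁ * ω * t)))
    (a b : ℝ) (x : ℝ → ℝ)
    (hx : ∀ t, x t = Real.sqrt ((L - c₁ * ω * t) / ω) *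
      ((Real.cosh (ωtil * τ t) + c₁ / (2 * ωtil) * Real.sinh (ωtil * τ t)) * a +
        1 / ωtil * Real.sinh (ωtil * τ t) * b)) :
    (0 : ℝ) ∈ J ∧ τ 0 = 0 ∧
      ∀ t ∈ J, deriv (deriv x) t + ω ^ 2 / (L - c₁ * ω * t) ^ 2 * x t = 0 := by
  have hωt : 0 < ωtil := hωtil ▸ Real.sqrt_pos.mpr h
  have hω2 : ωtil ^ 2 = c₁ ^ 2 / 4 - 1 := by rw [hωtil]; exact Real.sq_sqrt h.le
  refine ⟨by simp [hJ, hL], by simp [hτ, div_self hL.ne'], ?_⟩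
  set k : ℝ := ωtil / c₁ with hk
  set p : ℝ := 1/2 + (-k) with hp
  set q : ℝ := 1/2 + k with hq
  set A : ℝ := (a/2 + c₁*a/(4*ωtil) + b/(2*ωtil)) * L ^ k / Real.sqrt ω with hA
  set B : ℝ := (a/2 - c₁*a/(4*ωtil) - b/(2*ωtil)) / L ^ k / Real.sqrt ω with hB
  set g : ℝ → ℝ := fun s => A * (L - c₁*ω*s) ^ p + B * (L - c₁*ω*s) ^ q with hg
  have hLk : (0:ℝ) < L ^ k := Real.rpow_pos_of_pos hL k
  have hsω : (0:ℝ) < Real.sqrt ω := Real.sqrt_pos.mpr hω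
  -- x = g on J
  have hxg : ∀ s ∈ J, x s = g s := by
    intro s hs
    rw [hJ] at hs
    have hu : 0 < L - c₁*ω*s := hs
    have hLu : 0 < L / (L - c₁*ω*s) := div_pos hL hu
    have hexp : Real.exp (ωtil * τ s) = (L/(L - c₁*ω*s)) ^ k := by
      rw [hτ, Real.rpow_def_of_pos hLu]
      congr 1
      rw [hk]
      ring
    have hluk : (L/(L - c₁*ω*s)) ^ k = L ^ k * ((L - c₁*ω*s) ^ k)⁻¹ := by
      rw [div_eq_mul_inv, Real.mul_rpow hL.le (inv_nonneg.mpr hu.le), Real.inv_rpow hu.le]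
    have huk : (0:ℝ) < (L - c₁*ω*s) ^ k := Real.rpow_pos_of_pos hu k
    have hupowp : (L - c₁*ω*s) ^ p = Real.sqrt (L - c₁*ω*s) * ((L - c₁*ω*s) ^ k)⁻¹ := by
      rw [hp, Real.rpow_add hu, Real.rpow_neg hu.le, ← Real.sqrt_eq_rpow]
    have hupowq : (L - c₁*ω*s) ^ q = Real.sqrt (L - c₁*ω*s) * (L - c₁*ω*s) ^ k := by
      rw [hq, Real.rpow_add hu, ← Real.sqrt_eq_rpow]
    have hgs : g s = A * (L - c₁*ω*s) ^ p + B * (L - c₁*ω*s) ^ q := rfl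
    rw [hx, hgs, Real.cosh_eq, Real.sinh_eq, Real.exp_neg, hexp, hluk, hupowp, hupowq,
      Real.sqrt_div hu.le, hA, hB]
    field_simp [hωt.ne', hsω.ne', hLk.ne', huk.ne']
    ring
  -- J is open
  have hJopen : IsOpen J := by
    rw [hJ]
    exact isOpen_lt continuous_const (by continuity)
  set g1 : ℝ → ℝ := fun s =>
      A * (-(c₁*ω) * p * (L - c₁*ω*s) ^ (p-1)) + B * (-(c₁*ω) * q * (L - c₁*ω*s) ^ (q-1))
    with hg1
  set g2 : ℝ → ℝ := fun s =>
      A * (-(c₁*ω) * p * (-(c₁*ω) * (p-1) * (L - c₁*ω*s) ^ (p-1-1))) +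
      B * (-(c₁*ω) * q * (-(c₁*ω) * (q-1) * (L - c₁*ω*s) ^ (q-1-1)))
    with hg2
  have hud : ∀ s : ℝ, HasDerivAt (fun s => L - c₁*ω*s) (-(c₁*ω)) s := fun s => by
    simpa using ((hasDerivAt_id s).const_mul (c₁*ω)).const_sub L
  have hgd : ∀ s ∈ J, HasDerivAt g (g1 s) s := by
    intro s hs
    rw [hJ] at hs
    exact (((hud s).rpow_const (Or.inl hs.ne')).const_mul A).add
      (((hud s).rpow_const (Or.inl hs.ne')).const_mul B)
  have hg1d : ∀ s ∈ J, HasDerivAt g1 (g2 s) s := by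
    intro s hs
    rw [hJ] at hs
    have hu' : 0 < L - c₁*ω*s := hs
    have hne : L - c₁*ω*s ≠ 0 := hu'.ne'
    have h1 : HasDerivAt (fun y => A * (-(c₁*ω) * p) * (L - c₁*ω*y) ^ (p-1))
        (A * (-(c₁*ω) * p) * (-(c₁*ω) * (p-1) * (L - c₁*ω*s) ^ (p-1-1))) s :=
      ((hud s).rpow_const (p := p-1) (Or.inl hne)).const_mul _
    have h2 : HasDerivAt (fun y => B * (-(c₁*ω) * q) * (L - c₁*ω*y) ^ (q-1))
        (B * (-(c₁*ω) * q) * (-(c₁*ω) * (q-1) * (L - c₁*ω*s) ^ (q-1-1))) s :=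
      ((hud s).rpow_const (p := q-1) (Or.inl hne)).const_mul _
    have h3 := h1.add h2
    have hfun : (fun y => A * (-(c₁*ω) * p) * (L - c₁*ω*y) ^ (p-1) +
        B * (-(c₁*ω) * q) * (L - c₁*ω*y) ^ (q-1)) = g1 := by
      funext y; simp only [hg1]; ring
    have hval : A * (-(c₁*ω) * p) * (-(c₁*ω) * (p-1) * (L - c₁*ω*s) ^ (p-1-1)) +
        B * (-(c₁*ω) * q) * (-(c₁*ω) * (q-1) * (L - c₁*ω*s) ^ (q-1-1)) = g2 s := by
      simp only [hg2]; ring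
    rw [hval] at h3
    rw [← hfun]
    exact h3
  intro t ht
  -- second derivative of x equals g2 t
  have hmem : J ∈ nhds t := hJopen.mem_nhds ht
  have hxx : deriv (deriv x) t = g2 t := by
    have e1 : deriv x =ᶠ[nhds t] g1 := by
      filter_upwards [hmem] with s hs
      have : x =ᶠ[nhds s] g := Filter.eventuallyEq_of_mem (hJopen.mem_nhds hs) hxg
      rw [this.deriv_eq, (hgd s hs).deriv]
    rw [e1.deriv_eq, (hg1d t ht).deriv]
  rw [hJ] at ht
  have hu : 0 < L - c₁*ω*t := ht
  have hpp : p * (p-1) * c₁^2 = -1 := by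
    have : p * (p-1) * c₁^2 = ωtil^2 - c₁^2/4 := by rw [hp, hk]; field_simp; ring
    rw [this, hω2]; ring
  have hqq : q * (q-1) * c₁^2 = -1 := by
    have : q * (q-1) * c₁^2 = ωtil^2 - c₁^2/4 := by rw [hq, hk]; field_simp; ring
    rw [this, hω2]; ring
  have hrp : (L - c₁*ω*t) ^ (p-1-1) = (L - c₁*ω*t) ^ p / (L - c₁*ω*t)^2 := by
    rw [show p-1-1 = p - 2 by ring, Real.rpow_sub hu, show ((2:ℝ)) = ((2:ℕ):ℝ) by norm_num,
      Real.rpow_natCast]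
  have hrq : (L - c₁*ω*t) ^ (q-1-1) = (L - c₁*ω*t) ^ q / (L - c₁*ω*t)^2 := by
    rw [show q-1-1 = q - 2 by ring, Real.rpow_sub hu, show ((2:ℝ)) = ((2:ℕ):ℝ) by norm_num,
      Real.rpow_natCast]
  rw [hxx, hxg t (by rw [hJ]; exact ht)]
  simp only [hg2, hg]
  rw [hrp, hrq]
  have hune : (L - c₁*ω*t) ≠ 0 := hu.ne'
  field_simp
  linear_combination (A * (L - c₁*ω*t) ^ p * ω^2) * hpp + (B * (L - c₁*ω*t) ^ q * ω^2) * hqq
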